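/- There is a data structure for rank with additive approximation matching the following correctness property: split Q[1,n] into blocks of size ε/2; for each symbol α store a bit vector B_α where bit i is set iff block i of Q contains the j-th occurrence of α for some j that is a multiple of ε/2. Then for any position i, letting j = ⌊2i/ε⌋ and k = rank_1(j−1) on B_α, the value r̃ = k·ε/2 satisfies r̃ ≤ rank_α(i) ≤ r̃ + ε, where rank_α(i) is the exact rank. -/

import Mathlib

open scoped Classical

/-- `qrank n Q α i` counts occurrences of `α` among the first `i` positions
of the quad vector `Q`. -/
def qrank (n : ℕ) (Q : Fin n → Fin 4) (α : Fin 4) (i : ℕ) : ℕ :=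
  (Finset.univ.filter (fun p : Fin n => (p : ℕ) < i ∧ Q p = α)).card

/-- Bit `b` of the bit vector `B_α` (blocks of size `h = ε/2`): it is set iff
block `b` of `Q` contains the `j`-th occurrence of `α` for some positive
multiple `j` of `h`. -/
def Bvec (n h : ℕ) (Q : Fin n → Fin 4) (α : Fin 4) (b : ℕ) : Prop :=
  ∃ p : Fin n, b * h ≤ (p : ℕ) ∧ (p : ℕ) < (b + 1) * h ∧ Q p = α ∧
    1 ≤ qrank n Q α ((p : ℕ) + 1) ∧ h ∣ qrank n Q α ((p : ℕ) + 1)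

lemma qrank_mono (n : ℕ) (Q : Fin n → Fin 4) (α : Fin 4) {i j : ℕ} (hij : i ≤ j) :
    qrank n Q α i ≤ qrank n Q α j := by
  apply Finset.card_le_card
  intro p hp
  simp only [Finset.mem_filter] at hp ⊢
  exact ⟨hp.1, lt_of_lt_of_le hp.2.1 hij, hp.2.2⟩

lemma qrank_le_add (n : ℕ) (Q : Fin n → Fin 4) (α : Fin 4) {i j : ℕ} (hij : i ≤ j) :
    qrank n Q α j ≤ qrank n Q α i + (j - i) := by
  classical
  have hsub : (Finset.univ.filter (fun p : Fin n => (p : ℕ) < j ∧ Q p = α)) ⊆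
      (Finset.univ.filter (fun p : Fin n => (p : ℕ) < i ∧ Q p = α)) ∪
      (Finset.univ.filter (fun p : Fin n => i ≤ (p : ℕ) ∧ (p : ℕ) < j)) := by
    intro p hp
    simp only [Finset.mem_filter, Finset.mem_union, Finset.mem_univ, true_and] at hp ⊢
    rcases lt_or_ge (p : ℕ) i with h | h
    · exact Or.inl ⟨h, hp.2⟩
    · exact Or.inr ⟨h, hp.1⟩
  have h2 : (Finset.univ.filter (fun p : Fin n => i ≤ (p : ℕ) ∧ (p : ℕ) < j)).card ≤ j - i := by
    have := Finset.card_le_card_of_injOn (f := fun p : Fin n => (p : ℕ))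
      (s := Finset.univ.filter (fun p : Fin n => i ≤ (p : ℕ) ∧ (p : ℕ) < j))
      (t := Finset.Ico i j)
      (by intro p hp; simp only [Finset.mem_coe, Finset.mem_filter, Finset.mem_univ, true_and] at hp
          exact Finset.mem_Ico.mpr hp)
      (by intro a _ b _ hab; exact Fin.val_injective hab)
    simpa using this
  calc qrank n Q α j ≤ _ := Finset.card_le_card hsub
    _ ≤ _ + _ := Finset.card_union_le _ _
    _ ≤ qrank n Q α i + (j - i) := by exact Nat.add_le_add_left h2 _

lemma qrank_lt_succ (n : ℕ) (Q : Fin n → Fin 4) (α : Fin 4) (p : Fin n) (hp : Q p = α) :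
    qrank n Q α (p : ℕ) < qrank n Q α ((p : ℕ) + 1) := by
  apply Finset.card_lt_card
  constructor
  · intro q hq
    simp only [Finset.mem_filter] at hq ⊢
    exact ⟨hq.1, Nat.lt_succ_of_lt hq.2.1, hq.2.2⟩
  · intro hsub
    have := hsub (by simp [hp] : p ∈ _)
    simp at this

lemma qrank_lt_of_occ (n : ℕ) (Q : Fin n → Fin 4) (α : Fin 4) (p : Fin n) (hp : Q p = α)
    {j : ℕ} (hj : j ≤ (p : ℕ)) :
    qrank n Q α j < qrank n Q α ((p : ℕ) + 1) :=
  lt_of_le_of_lt (qrank_mono n Q α hj) (qrank_lt_succ n Q α p hp)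

lemma exists_occurrence (n : ℕ) (Q : Fin n → Fin 4) (α : Fin 4) {j i : ℕ}
    (h1 : 1 ≤ j) (h2 : j ≤ qrank n Q α i) :
    ∃ p : Fin n, (p : ℕ) < i ∧ Q p = α ∧ qrank n Q α ((p : ℕ) + 1) = j := by
  classical
  induction i with
  | zero =>
    exfalso
    have : qrank n Q α 0 = 0 := by simp [qrank]
    omega
  | succ i ih =>
    rcases le_or_gt j (qrank n Q α i) with h | h
    · obtain ⟨p, hp1, hp2, hp3⟩ := ih h
      exact ⟨p, Nat.lt_succ_of_lt hp1, hp2, hp3⟩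
    · have hlt : qrank n Q α i < qrank n Q α (i+1) := lt_of_lt_of_le h h2
      have hns : ¬ ((Finset.univ.filter (fun p : Fin n => (p : ℕ) < i + 1 ∧ Q p = α)) ⊆
          (Finset.univ.filter (fun p : Fin n => (p : ℕ) < i ∧ Q p = α))) := by
        intro hts
        have := Finset.card_le_card hts
        simp only [qrank] at hlt
        omega
      obtain ⟨p, hpt, hps⟩ := Finset.not_subset.mp hns
      simp only [Finset.mem_filter, Finset.mem_univ, true_and] at hpt hps
      have hpi : (p : ℕ) = i := by
        rcases hpt with ⟨h1', h2'⟩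
        by_contra hne
        exact hps ⟨by omega, h2'⟩
      have hle : qrank n Q α (i+1) ≤ qrank n Q α i + 1 := by
        have := qrank_le_add n Q α (i := i) (j := i+1) (by omega)
        simpa using this
      refine ⟨p, by omega, hpt.2, ?_⟩
      rw [hpi]
      omega

lemma div_mul_bounds (w h : ℕ) (h0 : 0 < h) : (w / h) * h ≤ w ∧ w < (w / h) * h + h := by
  have h1 := Nat.div_add_mod w h
  have h2 := Nat.mod_lt w h0
  have h3 : h * (w / h) = (w / h) * h := mul_comm _ _
  omega

noncomputable def wit (n h : ℕ) (Q : Fin n → Fin 4) (α : Fin 4) (b : ℕ) : ℕ :=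
  if hb : Bvec n h Q α b then ((Classical.choose hb : Fin n) : ℕ) else 0

lemma wit_spec {n h : ℕ} {Q : Fin n → Fin 4} {α : Fin 4} {b : ℕ} (hb : Bvec n h Q α b) :
    b * h ≤ wit n h Q α b ∧ wit n h Q α b < (b + 1) * h ∧
    (∃ p : Fin n, (p : ℕ) = wit n h Q α b ∧ Q p = α) ∧
    1 ≤ qrank n Q α (wit n h Q α b + 1) ∧ h ∣ qrank n Q α (wit n h Q α b + 1) := by
  unfold wit
  rw [dif_pos hb]
  obtain ⟨h1, h2, h3, h4, h5⟩ := Classical.choose_spec hb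
  exact ⟨h1, h2, ⟨Classical.choose hb, rfl, h3⟩, h4, h5⟩

noncomputable def occ (n : ℕ) (Q : Fin n → Fin 4) (α : Fin 4) (j i : ℕ) : ℕ :=
  if hj : ∃ p : Fin n, (p : ℕ) < i ∧ Q p = α ∧ qrank n Q α ((p : ℕ) + 1) = j then
    ((Classical.choose hj : Fin n) : ℕ) else 0

lemma occ_spec {n : ℕ} {Q : Fin n → Fin 4} {α : Fin 4} {j i : ℕ}
    (h1 : 1 ≤ j) (h2 : j ≤ qrank n Q α i) :
    occ n Q α j i < i ∧ (∃ p : Fin n, (p : ℕ) = occ n Q α j i ∧ Q p = α) ∧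
    qrank n Q α (occ n Q α j i + 1) = j := by
  have hj := exists_occurrence n Q α h1 h2
  unfold occ
  rw [dif_pos hj]
  obtain ⟨ha, hb, hc⟩ := Classical.choose_spec hj
  exact ⟨ha, ⟨Classical.choose hj, rfl, hb⟩, hc⟩

lemma aux_main (n h : ℕ) (hh : 1 ≤ h) (Q : Fin n → Fin 4) (α : Fin 4) (i : ℕ)
    [DecidablePred (Bvec n h Q α)] :
    ((Finset.range (i / h)).filter (Bvec n h Q α)).card * h ≤ qrank n Q α i ∧
    qrank n Q α i ≤ ((Finset.range (i / h)).filter (Bvec n h Q α)).card * h + 2 * h := by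
  set S := (Finset.range (i / h)).filter (Bvec n h Q α) with hS
  set r := qrank n Q α i with hr
  have h0 : 0 < h := hh
  constructor
  · -- lower bound
    have hcard : S.card ≤ r / h := by
      have hmaps : ∀ b ∈ S, qrank n Q α (wit n h Q α b + 1) ∈
          (Finset.Ioc 0 r).filter (h ∣ ·) := by
        intro b hb
        simp only [hS, Finset.mem_filter, Finset.mem_range] at hb
        obtain ⟨hbr, hbv⟩ := hb
        obtain ⟨w1, w2, _, w4, w5⟩ := wit_spec hbv
        have hwle : wit n h Q α b + 1 ≤ i := by
          have h1 : (b + 1) * h ≤ (i / h) * h := Nat.mul_le_mul_right h (by omega)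
          have h2 := (div_mul_bounds i h h0).1
          omega
        have hmono := qrank_mono n Q α hwle
        simp only [Finset.mem_filter, Finset.mem_Ioc]
        exact ⟨⟨w4, hmono⟩, w5⟩
      have hinj : Set.InjOn (fun b => qrank n Q α (wit n h Q α b + 1)) S := by
        intro b hb b' hb' hfe
        simp only [hS, Finset.coe_filter, Set.mem_setOf_eq, Finset.mem_range] at hb hb'
        by_contra hne
        have key : ∀ c c' : ℕ, Bvec n h Q α c → Bvec n h Q α c' → c < c' →
            qrank n Q α (wit n h Q α c + 1) < qrank n Q α (wit n h Q α c' + 1) := by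
          intro c c' hc hc' hlt
          obtain ⟨c1, c2, _, _, _⟩ := wit_spec hc
          obtain ⟨d1, d2, ⟨p', hp'1, hp'2⟩, _, _⟩ := wit_spec hc'
          have hcc : wit n h Q α c < wit n h Q α c' := by
            have : (c + 1) * h ≤ c' * h := Nat.mul_le_mul_right h (by omega)
            omega
          have := qrank_lt_of_occ n Q α p' hp'2 (j := wit n h Q α c + 1) (by omega)
          rwa [hp'1] at this
        rcases lt_trichotomy b b' with hlt | heq | hlt
        · exact absurd hfe (Nat.ne_of_lt (key b b' hb.2 hb'.2 hlt))
        · exact hne heq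
        · exact absurd hfe.symm (Nat.ne_of_lt (key b' b hb'.2 hb.2 hlt))
      have := Finset.card_le_card_of_injOn _ hmaps hinj
      rwa [Nat.Ioc_filter_dvd_card_eq_div] at this
    calc S.card * h ≤ (r / h) * h := Nat.mul_le_mul_right h hcard
      _ ≤ r := Nat.div_mul_le_self r h
  · -- upper bound
    have hBle := (div_mul_bounds i h h0).1
    have hiB := (div_mul_bounds i h h0).2
    set r0 := qrank n Q α ((i / h) * h) with hr0
    have hdivk : r0 / h ≤ S.card := by
      have hmaps : ∀ m ∈ Finset.Icc 1 (r0 / h),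
          occ n Q α (m * h) ((i / h) * h) / h ∈ S := by
        intro m hm
        simp only [Finset.mem_Icc] at hm
        have hm1 : 1 ≤ m * h := Nat.one_le_iff_ne_zero.mpr (Nat.mul_ne_zero (by omega) (by omega))
        have hm2 : m * h ≤ r0 := by
          calc m * h ≤ (r0 / h) * h := Nat.mul_le_mul_right h hm.2
            _ ≤ r0 := Nat.div_mul_le_self r0 h
        obtain ⟨o1, ⟨p, hp1, hp2⟩, o3⟩ := occ_spec hm1 hm2
        set w := occ n Q α (m * h) ((i / h) * h) with hw
        have hwb := div_mul_bounds w h h0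
        simp only [hS, Finset.mem_filter, Finset.mem_range]
        constructor
        · exact Nat.div_lt_of_lt_mul (by rw [mul_comm]; exact o1)
        · refine ⟨p, ?_, ?_, hp2, ?_, ?_⟩
          · rw [hp1]; exact hwb.1
          · rw [hp1]
            have : (w / h + 1) * h = (w / h) * h + h := by ring
            omega
          · rw [hp1, o3]; omega
          · rw [hp1, o3]; exact dvd_mul_left h m
      have hinj : Set.InjOn (fun m => occ n Q α (m * h) ((i / h) * h) / h)
          (Finset.Icc 1 (r0 / h)) := by
        intro m hm m' hm' hfe
        simp only [Finset.coe_Icc, Set.mem_Icc] at hm hm'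
        by_contra hne
        have key : ∀ c c' : ℕ, 1 ≤ c → c ≤ r0 / h → 1 ≤ c' → c' ≤ r0 / h → c < c' →
            occ n Q α (c * h) ((i / h) * h) / h ≠
              occ n Q α (c' * h) ((i / h) * h) / h := by
          intro c c' hc1 hc2 hc'1 hc'2 hlt hfeq
          have hch : 1 ≤ c * h := Nat.one_le_iff_ne_zero.mpr (by positivity)
          have hch2 : c * h ≤ r0 :=
            le_trans (Nat.mul_le_mul_right h hc2) (Nat.div_mul_le_self r0 h)
          have hc'h : 1 ≤ c' * h := Nat.one_le_iff_ne_zero.mpr (by positivity)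
          have hc'h2 : c' * h ≤ r0 :=
            le_trans (Nat.mul_le_mul_right h hc'2) (Nat.div_mul_le_self r0 h)
          obtain ⟨o1, _, o3⟩ := occ_spec (n := n) (Q := Q) (α := α) hch hch2
          obtain ⟨o1', _, o3'⟩ := occ_spec (n := n) (Q := Q) (α := α) hc'h hc'h2
          set w := occ n Q α (c * h) ((i / h) * h) with hwd
          set w' := occ n Q α (c' * h) ((i / h) * h) with hw'd
          have hmul : c * h < c' * h := (Nat.mul_lt_mul_right h0).mpr hlt
          have hww : w < w' := by
            by_contra hge
            push_neg at hge
            have := qrank_mono n Q α (Nat.add_le_add_right hge 1)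
            omega
          have hb1 := div_mul_bounds w h h0
          have hb2 := div_mul_bounds w' h h0
          have heqb : (w / h) * h = (w' / h) * h := by
            rw [hfeq]
          have hstep := qrank_le_add n Q α (i := w + 1) (j := w' + 1) (by omega)
          have hhh : (c + 1) * h ≤ c' * h := Nat.mul_le_mul_right h (by omega)
          have hex : (c + 1) * h = c * h + h := by ring
          omega
        rcases lt_trichotomy m m' with hlt | heq | hlt
        · exact key m m' hm.1 hm.2 hm'.1 hm'.2 hlt hfe
        · exact hne heq
        · exact key m' m hm'.1 hm'.2 hm.1 hm.2 hlt hfe.symm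
      have := Finset.card_le_card_of_injOn _ hmaps hinj
      simpa using this
    have hr0lt : r0 < S.card * h + h := by
      have h1 := div_mul_bounds r0 h h0
      have h3 : (r0 / h) * h ≤ S.card * h := Nat.mul_le_mul_right h hdivk
      omega
    have hstep : r ≤ r0 + (i - (i / h) * h) := qrank_le_add n Q α hBle
    omega

/-- Correctness of the additive-approximation rank structure: with blocks of
size `h = ε/2` and the bit vectors `B_α` as above, for any position `i`,
letting `k` be the number of set bits of `B_α` strictly before the block
containing `i`, the value `r̃ = k * (ε/2)` satisfies
`r̃ ≤ rank_α(i) ≤ r̃ + ε`. -/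
theorem approx_rank_upper (n h : ℕ) (hh : 1 ≤ h) (Q : Fin n → Fin 4)
    (α : Fin 4) (i : ℕ) (hi : i ≤ n) :
    letI := Classical.decPred (Bvec n h Q α)
    let k := ((Finset.range (i / h)).filter (Bvec n h Q α)).card
    k * h ≤ qrank n Q α i ∧ qrank n Q α i ≤ k * h + 2 * h := by
  intro k
  exact @aux_main n h hh Q α i (Classical.decPred _)
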